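/- Let ψ : [0,∞) → ℝ be concave, nondecreasing, differentiable on (0,∞), with ψ(0) ≥ 0, and let G, γ, P, I > 0. Then the function h(x) = x · ψ( G · min(γ x, P) / (I x) ) is nondecreasing on (0,∞). -/

import Mathlib

/-- If `ψ : [0,∞) → ℝ` is concave, nondecreasing, differentiable on `(0,∞)` with
`ψ 0 ≥ 0`, and `G, γ, P, I > 0`, then the achievable-rate function
`h(x) = x * ψ (G * min (γ x) P / (I x))` is nondecreasing on `(0,∞)`. -/
theorem rate_monotone (ψ : ℝ → ℝ) (G γ P I : ℝ)
    (hG : 0 < G) (hγ : 0 < γ) (hP : 0 < P) (hI : 0 < I)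
    (hψconc : ConcaveOn ℝ (Set.Ici (0 : ℝ)) ψ)
    (hψmono : MonotoneOn ψ (Set.Ici (0 : ℝ)))
    (hψdiff : DifferentiableOn ℝ ψ (Set.Ioi (0 : ℝ)))
    (hψ0 : 0 ≤ ψ 0) :
    MonotoneOn (fun x : ℝ => x * ψ (G * min (γ * x) P / (I * x))) (Set.Ioi (0 : ℝ)) := by
  intro x hx y hy hxy
  simp only [Set.mem_Ioi] at hx hy
  set u := G * min (γ * x) P / (I * x) with hu
  set v := G * min (γ * y) P / (I * y) with hv
  have hmx : 0 < min (γ * x) P := lt_min (by positivity) hP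
  have hmy : 0 < min (γ * y) P := lt_min (by positivity) hP
  have hu0 : 0 ≤ u := by rw [hu]; positivity
  have hv0 : 0 ≤ v := by rw [hv]; positivity
  have hxu : x * u = G * min (γ * x) P / I := by
    rw [hu]; field_simp
  have hyv : y * v = G * min (γ * y) P / I := by
    rw [hv]; field_simp
  have hmle : min (γ * x) P ≤ min (γ * y) P :=
    min_le_min (mul_le_mul_of_nonneg_left hxy hγ.le) le_rfl
  have hkey : x * u ≤ y * v := by
    rw [hxu, hyv]
    gcongr
  set t := x / y with ht
  have ht0 : 0 ≤ t := by positivity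
  have ht1 : t ≤ 1 := by
    rw [ht, div_le_one hy]; exact hxy
  have htu_le : t * u ≤ v := by
    rw [ht, div_mul_eq_mul_div, div_le_iff₀ hy, mul_comm v y]
    exact hkey
  have htu0 : (0:ℝ) ≤ t * u := mul_nonneg ht0 hu0
  -- concavity: ψ (t*u + (1-t)*0) ≥ t * ψ u + (1-t) * ψ 0
  have hconc := hψconc.2 (Set.mem_Ici.mpr hu0) (Set.mem_Ici.mpr (le_refl (0:ℝ)))
      ht0 (by linarith : (0:ℝ) ≤ 1 - t) (by ring)
  simp only [smul_eq_mul, mul_zero, add_zero] at hconc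
  have hmono1 : ψ (t * u) ≤ ψ v :=
    hψmono (Set.mem_Ici.mpr htu0) (Set.mem_Ici.mpr hv0) htu_le
  have hψu0 : 0 ≤ ψ u :=
    hψ0.trans (hψmono (Set.mem_Ici.mpr (le_refl (0:ℝ))) (Set.mem_Ici.mpr hu0) hu0)
  have : x * ψ u ≤ y * ψ v := by
    have h1 : t * ψ u ≤ ψ v := by nlinarith
    have h2 : x * ψ u = y * (t * ψ u) := by
      rw [ht]; field_simp
    rw [h2]
    exact mul_le_mul_of_nonneg_left h1 hy.le
  simpa using this
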